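/- The characteristic element w of c belongs to I₀ if dim_{𝔽₂} I is even, and belongs to I₁ if dim_{𝔽₂} I is odd. Equivalently, writing w = φ(z) for some z ∈ V, one has B(z, c z) = dim_{𝔽₂} I (mod 2). -/

import Mathlib

open Module LinearMap Submodule

universe u

set_option maxHeartbeats 1000000

private lemma zmod2_ne : ∀ a : ZMod 2, a ≠ 0 → a = 1 := by decide
private lemma zmod2_add_self : ∀ a : ZMod 2, a + a = 0 := by decide

private theorem key : ∀ (n : ℕ) (V : Type u) [AddCommGroup V] [Module (ZMod 2) V]
    [FiniteDimensional (ZMod 2) V],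
    Module.finrank (ZMod 2) V ≤ n →
    ∀ (S : V →ₗ[ZMod 2] V →ₗ[ZMod 2] ZMod 2),
      (∀ x y, S x y = S y x) →
      ∀ z : V, (∀ x, S x x = S x z) →
      S z z = (Module.finrank (ZMod 2) (LinearMap.range S) : ZMod 2) := by
  intro n
  induction n with
  | zero =>
    intro V _ _ _ hn S hsymm z hz
    have hsub : Subsingleton V := by
      rw [← Module.finrank_zero_iff (R := ZMod 2)]
      omega
    have hz0 : z = 0 := Subsingleton.elim _ _
    have hS : LinearMap.range S = ⊥ := by
      rw [LinearMap.range_eq_bot]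
      ext x y
      rw [Subsingleton.elim x (0 : V)]
      simp
    rw [hz0, hS]
    simp
  | succ n ih =>
    intro V _ _ _ hn S hsymm z hz
    by_cases hA : ∃ e, S e e ≠ 0
    · -- Case A : split off a vector with S e e = 1
      obtain ⟨e, hee'⟩ := hA
      have hee : S e e = 1 := zmod2_ne _ hee'
      set W : Submodule (ZMod 2) V := LinearMap.ker (S e) with hW
      -- range of S e is everything
      have hSe_surj : Function.Surjective (S e) := by
        intro a
        exact ⟨a • e, by rw [map_smul, smul_eq_mul, hee, mul_one]⟩
      have hrk1 : Module.finrank (ZMod 2) W + 1 = Module.finrank (ZMod 2) V := by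
        have h1 := LinearMap.finrank_range_add_finrank_ker (S e)
        rw [LinearMap.range_eq_top.mpr hSe_surj] at h1
        rw [finrank_top] at h1
        simp only [Module.finrank_self] at h1
        rw [← hW] at h1
        omega
      set SW := S.compl₁₂ W.subtype W.subtype with hSW
      -- membership of ker S in W
      have hle : LinearMap.ker S ≤ W := by
        intro x hx
        rw [LinearMap.mem_ker] at hx ⊢
        rw [hsymm e x, hx]
        rfl
      -- decomposition of vectors
      have hdec : ∀ v : V, v - S e v • e ∈ W := by
        intro v
        rw [LinearMap.mem_ker, map_sub, map_smul, smul_eq_mul, hee, mul_one, sub_self]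
      -- kernel of the restriction
      have hker : LinearMap.ker SW = Submodule.comap W.subtype (LinearMap.ker S) := by
        ext ⟨x, hxW⟩
        simp only [LinearMap.mem_ker, Submodule.mem_comap, Submodule.coe_subtype]
        constructor
        · intro h
          have h' : ∀ y ∈ W, S x y = 0 := by
            intro y hy
            have := DFunLike.congr_fun h (⟨y, hy⟩ : W)
            simpa [hSW, LinearMap.compl₁₂_apply] using this
          have hxe : S x e = 0 := by
            rw [hsymm x e]
            exact hxW
          ext v
          have hv := hdec v
          have : S x v = S x (v - S e v • e) + S e v * S x e := by
            rw [map_sub, map_smul, smul_eq_mul]; ring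
          rw [this, h' _ hv, hxe, mul_zero, add_zero]
          rfl
        · intro h
          ext ⟨y, hy⟩
          simp [hSW, LinearMap.compl₁₂_apply, h]
      have hkerrk : Module.finrank (ZMod 2) (LinearMap.ker SW)
          = Module.finrank (ZMod 2) (LinearMap.ker S) := by
        rw [hker]
        exact LinearEquiv.finrank_eq (Submodule.comapSubtypeEquivOfLe hle)
      -- rank relation
      have hrank : Module.finrank (ZMod 2) (LinearMap.range S)
          = Module.finrank (ZMod 2) (LinearMap.range SW) + 1 := by
        have h1 := LinearMap.finrank_range_add_finrank_ker S
        have h2 := LinearMap.finrank_range_add_finrank_ker SW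
        rw [hkerrk] at h2
        omega
      -- the new base point
      have hSez : S e z = 1 := by rw [← hz e, hee]
      set z' : V := z - e with hz'
      have hz'W : z' ∈ W := by
        have := hdec z
        rwa [hSez, one_smul] at this
      have hz'e : S e z' = 0 := hz'W
      have hz're : S z' e = 0 := by rw [hsymm]; exact hz'e
      -- apply the inductive hypothesis
      have hWn : Module.finrank (ZMod 2) W ≤ n := by omega
      have hIH := ih W hWn SW
        (by intro ⟨x, hx⟩ ⟨y, hy⟩; simpa [hSW, LinearMap.compl₁₂_apply] using hsymm x y)
        ⟨z', hz'W⟩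
        (by
          intro ⟨x, hx⟩
          simp only [hSW, LinearMap.compl₁₂_apply, Submodule.coe_subtype]
          have hxe : S x e = 0 := by rw [hsymm x e]; exact hx
          calc S x x = S x z := hz x
            _ = S x z' + S x e := by rw [hz']; rw [map_sub]; ring
            _ = S x z' := by rw [hxe, add_zero])
      have hSWzz : SW ⟨z', hz'W⟩ ⟨z', hz'W⟩ = S z' z' := by
        simp [hSW, LinearMap.compl₁₂_apply]
      rw [hSWzz] at hIH
      -- final computation
      have hzz : S z z = S z' z' + 1 := by
        have : z = z' + e := by rw [hz']; abel
        rw [this, map_add]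
        simp only [LinearMap.add_apply, map_add]
        rw [hz're, hee, hz'e]
        ring
      rw [hzz, hIH, hrank]
      push_cast
      ring
    · -- Case B : S is alternating
      push_neg at hA
      have hzz : S z z = 0 := hA z
      by_cases hS0 : S = 0
      · have : LinearMap.range S = ⊥ := by rw [hS0]; exact LinearMap.range_zero
        rw [hzz, this]
        simp
      · -- find a hyperbolic pair
        obtain ⟨e, he⟩ : ∃ e, S e ≠ 0 := by
          by_contra h
          push_neg at h
          exact hS0 (by ext x y; rw [h x]; rfl)
        obtain ⟨f, hef'⟩ : ∃ f, S e f ≠ 0 := by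
          by_contra h
          push_neg at h
          exact he (by ext y; rw [h y]; rfl)
        have hef : S e f = 1 := zmod2_ne _ hef'
        have hfe : S f e = 1 := by rw [hsymm]; exact hef
        set W : Submodule (ZMod 2) V := LinearMap.ker (S e) ⊓ LinearMap.ker (S f) with hW
        -- finrank W + 2 = finrank V
        set g : V →ₗ[ZMod 2] ZMod 2 × ZMod 2 := (S e).prod (S f) with hg
        have hWg : W = LinearMap.ker g := by
          ext x
          simp [hW, hg, LinearMap.mem_ker, LinearMap.prod_apply, Prod.ext_iff]
        have hgsurj : Function.Surjective g := by
          rintro ⟨a, b⟩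
          refine ⟨a • f + b • e, ?_⟩
          have hgv : g (a • f + b • e)
              = (a * S e f + b * S e e, a * S f f + b * S f e) := by
            simp [hg, LinearMap.prod_apply, Pi.prod, map_add, map_smul, smul_eq_mul]
          rw [hgv, hef, hfe, hA e, hA f]
          simp
        have hrk2 : Module.finrank (ZMod 2) W + 2 = Module.finrank (ZMod 2) V := by
          have h1 := LinearMap.finrank_range_add_finrank_ker g
          rw [LinearMap.range_eq_top.mpr hgsurj, finrank_top] at h1
          have h2 : Module.finrank (ZMod 2) (ZMod 2 × ZMod 2) = 2 := by
            rw [Module.finrank_prod, Module.finrank_self]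
          rw [h2] at h1
          rw [hWg]
          omega
        set SW := S.compl₁₂ W.subtype W.subtype with hSW
        have hle : LinearMap.ker S ≤ W := by
          intro x hx
          rw [LinearMap.mem_ker] at hx
          rw [hW, Submodule.mem_inf]
          constructor <;>
            · rw [LinearMap.mem_ker, hsymm _ x, hx]; rfl
        have hdec : ∀ v : V, v - S f v • e - S e v • f ∈ W := by
          intro v
          rw [hW, Submodule.mem_inf]
          constructor <;>
            simp only [LinearMap.mem_ker, map_sub, map_smul, smul_eq_mul]
          · rw [hA e, hef]; ring
          · rw [hA f, hfe]; ring
        have hker : LinearMap.ker SW = Submodule.comap W.subtype (LinearMap.ker S) := by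
          ext ⟨x, hxW⟩
          simp only [LinearMap.mem_ker, Submodule.mem_comap, Submodule.coe_subtype]
          constructor
          · intro h
            have h' : ∀ y ∈ W, S x y = 0 := by
              intro y hy
              have := DFunLike.congr_fun h (⟨y, hy⟩ : W)
              simpa [hSW, LinearMap.compl₁₂_apply] using this
            have hxW2 := Submodule.mem_inf.mp (hW ▸ hxW)
            have hxe : S x e = 0 := by rw [hsymm x e]; exact hxW2.1
            have hxf : S x f = 0 := by rw [hsymm x f]; exact hxW2.2
            ext v
            have hv := hdec v
            have : S x v = S x (v - S f v • e - S e v • f)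
                + S f v * S x e + S e v * S x f := by
              simp only [map_sub, map_smul, smul_eq_mul]; ring
            rw [this, h' _ hv, hxe, hxf]
            simp
          · intro h
            ext ⟨y, hy⟩
            simp [hSW, LinearMap.compl₁₂_apply, h]
        have hkerrk : Module.finrank (ZMod 2) (LinearMap.ker SW)
            = Module.finrank (ZMod 2) (LinearMap.ker S) := by
          rw [hker]
          exact LinearEquiv.finrank_eq (Submodule.comapSubtypeEquivOfLe hle)
        have hrank : Module.finrank (ZMod 2) (LinearMap.range S)
            = Module.finrank (ZMod 2) (LinearMap.range SW) + 2 := by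
          have h1 := LinearMap.finrank_range_add_finrank_ker S
          have h2 := LinearMap.finrank_range_add_finrank_ker SW
          rw [hkerrk] at h2
          omega
        have hWn : Module.finrank (ZMod 2) W ≤ n := by omega
        have hIH := ih W hWn SW
          (by intro ⟨x, hx⟩ ⟨y, hy⟩; simpa [hSW, LinearMap.compl₁₂_apply] using hsymm x y)
          0
          (by
            intro ⟨x, hx⟩
            simp only [hSW, LinearMap.compl₁₂_apply, Submodule.coe_subtype, map_zero]
            simp [hA x])
        simp only [map_zero, LinearMap.zero_apply] at hIH
        rw [hzz, hrank]
        push_cast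
        rw [← hIH]
        decide



private lemma zmod2_ne' : ∀ a : ZMod 2, a ≠ 0 → a = 1 := by decide
private lemma zmod2_add_self' : ∀ a : ZMod 2, a + a = 0 := by decide
private lemma zmod2_eq_of_add : ∀ a b : ZMod 2, a + b = 0 → a = b := by decide

theorem stmt_4
    (V : Type*) [AddCommGroup V] [Module (ZMod 2) V] [FiniteDimensional (ZMod 2) V]
    (B : V →ₗ[ZMod 2] V →ₗ[ZMod 2] ZMod 2)
    (hBalt : ∀ x, B x x = 0)
    (hBnd : ∀ x, (∀ y, B x y = 0) → x = 0)
    (c : V →ₗ[ZMod 2] V)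
    (hc : ∀ x, c (c x) = x)
    (hBc : ∀ x y, B (c x) (c y) = B x y)
    (φ : V →ₗ[ZMod 2] V) (hφ : φ = LinearMap.id + c)
    (w : V) (hw : ∀ x, B x (c x) = B x w) :
    (Even (Module.finrank (ZMod 2) ↥(LinearMap.range φ)) →
      w ∈ Submodule.map φ (LinearMap.ker (B.flip w))) ∧
    (¬ Even (Module.finrank (ZMod 2) ↥(LinearMap.range φ)) →
      w ∈ LinearMap.range φ ∧ w ∉ Submodule.map φ (LinearMap.ker (B.flip w))) ∧
    (∀ z, φ z = w →
      B z (c z) = (Module.finrank (ZMod 2) ↥(LinearMap.range φ) : ZMod 2)) := by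
  -- symmetry of B
  have hBsymm : ∀ x y, B x y = B y x := by
    intro x y
    have h := hBalt (x + y)
    simp only [map_add, LinearMap.add_apply] at h
    rw [hBalt, hBalt] at h
    apply zmod2_eq_of_add
    rw [← h]; ring
  -- x + x = 0
  have hm2 : ∀ x : V, x + x = 0 := by
    intro x
    have h : (2 : ZMod 2) • x = 0 := by rw [show (2 : ZMod 2) = 0 by decide, zero_smul]
    rwa [two_smul] at h
  -- φ applied
  have hφapp : ∀ x, φ x = x + c x := by
    intro x; rw [hφ]; rfl
  -- elements of ker φ are fixed by c
  have hcK : ∀ x, φ x = 0 → c x = x := by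
    intro x hx
    rw [hφapp] at hx
    have h1 : -x = c x := by rwa [add_eq_zero_iff_neg_eq] at hx
    have h2 : -x = x := neg_eq_of_add_eq_zero_left (hm2 x)
    rw [← h1, h2]
  -- moving c across B
  have hmove : ∀ x y, B (c x) y = B x (c y) := by
    intro x y
    have h := hBc x (c y)
    rwa [hc y] at h
  -- φ is self-adjoint
  have hselfadj : ∀ x y, B x (φ y) = B (φ x) y := by
    intro x y
    rw [hφapp, hφapp, map_add]
    simp only [map_add, LinearMap.add_apply]
    rw [hmove x y]
  -- the symmetric form S
  set S : V →ₗ[ZMod 2] V →ₗ[ZMod 2] ZMod 2 := B.compl₂ φ with hS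
  have hSapp : ∀ x y, S x y = B x (φ y) := fun x y => rfl
  have hSsymm : ∀ x y, S x y = S y x := by
    intro x y
    rw [hSapp, hSapp, hselfadj, hBsymm]
  have hSdiag : ∀ x, S x x = B x (c x) := by
    intro x
    rw [hSapp, hφapp, map_add, hBalt, zero_add]
  -- kernels agree
  have hkerS : LinearMap.ker S = LinearMap.ker φ := by
    ext x
    simp only [LinearMap.mem_ker]
    constructor
    · intro hx
      apply hBnd
      intro y
      have h0 : S y x = 0 := by rw [← hSsymm x y, hx]; rfl
      rw [hSapp] at h0
      rw [hBsymm]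
      exact h0
    · intro hx
      ext y
      rw [hSapp, hselfadj, hx]
      simp
  have hrankS : Module.finrank (ZMod 2) (LinearMap.range S)
      = Module.finrank (ZMod 2) (LinearMap.range φ) := by
    have h1 := LinearMap.finrank_range_add_finrank_ker S
    have h2 := LinearMap.finrank_range_add_finrank_ker φ
    rw [hkerS] at h1
    omega
  -- Part 3
  have h3 : ∀ z, φ z = w →
      B z (c z) = (Module.finrank (ZMod 2) ↥(LinearMap.range φ) : ZMod 2) := by
    intro z hzw
    have hkey := key (Module.finrank (ZMod 2) V) V le_rfl S hSsymm z
      (by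
        intro x
        rw [hSdiag, hw, hSapp, hzw])
    rw [hSdiag, hrankS] at hkey
    exact hkey
  -- injectivity of B
  have hBinj : Function.Injective B := by
    intro a b hab
    have h0 : a - b = 0 := by
      apply hBnd
      intro y
      rw [map_sub, hab]
      simp
    rwa [sub_eq_zero] at h0
  -- w lies in the range of φ
  have hwr : w ∈ LinearMap.range φ := by
    have hmaple : Submodule.map B (LinearMap.range φ)
        ≤ (LinearMap.ker φ).dualAnnihilator := by
      intro f hf
      obtain ⟨v, hv, rfl⟩ := hf
      obtain ⟨u, rfl⟩ := hv
      rw [Submodule.mem_dualAnnihilator]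
      intro x hx
      rw [LinearMap.mem_ker] at hx
      show B (φ u) x = 0
      rw [← hselfadj u x, hx]
      simp
    have hfr1 : Module.finrank (ZMod 2) (Submodule.map B (LinearMap.range φ))
        = Module.finrank (ZMod 2) (LinearMap.range φ) :=
      (Submodule.equivMapOfInjective B hBinj _).finrank_eq.symm
    have hfr2 : Module.finrank (ZMod 2) ((LinearMap.ker φ).dualAnnihilator)
        = Module.finrank (ZMod 2) (LinearMap.range φ) := by
      have hq := LinearEquiv.finrank_eq (R := ZMod 2) (M := V ⧸ LinearMap.ker φ)
        (N := ↥(LinearMap.ker φ).dualAnnihilator)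
        (Subspace.quotEquivAnnihilator (LinearMap.ker φ))
      have hq2 := Submodule.finrank_quotient_add_finrank (LinearMap.ker φ)
      have hq3 := LinearMap.finrank_range_add_finrank_ker φ
      omega
    have heq : Submodule.map B (LinearMap.range φ)
        = (LinearMap.ker φ).dualAnnihilator :=
      Submodule.eq_of_le_of_finrank_le hmaple (hfr2.trans hfr1.symm).le
    have hwann : B w ∈ (LinearMap.ker φ).dualAnnihilator := by
      rw [Submodule.mem_dualAnnihilator]
      intro x hx
      rw [LinearMap.mem_ker] at hx
      show B w x = 0
      rw [hBsymm w x, ← hw x, hcK x hx, hBalt]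
    rw [← heq] at hwann
    obtain ⟨v, hv, hBv⟩ := hwann
    rwa [← hBinj hBv]
  obtain ⟨z, hzw⟩ := hwr
  have h3z := h3 z hzw
  -- casts
  have hcast0 : ∀ m : ℕ, Even m → (m : ZMod 2) = 0 := by
    rintro m ⟨k, rfl⟩
    push_cast
    exact zmod2_add_self' _
  have hcast1 : ∀ m : ℕ, ¬ Even m → (m : ZMod 2) = 1 := by
    intro m hm
    obtain ⟨k, rfl⟩ := Nat.not_even_iff_odd.mp hm
    push_cast
    rw [show (2 : ZMod 2) = 0 by decide]
    ring
  refine ⟨?_, ?_, h3⟩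
  · intro hEven
    refine Submodule.mem_map.mpr ⟨z, ?_, hzw⟩
    rw [LinearMap.mem_ker, LinearMap.flip_apply, ← hw z, h3z, hcast0 _ hEven]
  · intro hOdd
    refine ⟨⟨z, hzw⟩, ?_⟩
    intro hmem
    rw [Submodule.mem_map] at hmem
    obtain ⟨z', hz'm, hz'w⟩ := hmem
    rw [LinearMap.mem_ker, LinearMap.flip_apply] at hz'm
    have h1 := h3 z' hz'w
    rw [hcast1 _ hOdd, hw z', hz'm] at h1
    exact absurd h1 (by decide)
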